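/- For every real number x with −2 ≤ x ≤ 2, there exists a sequence ε : ℕ → ℝ with ε n ∈ {−1, 1} for all n, such that the finite nested radicals v n = ε 0 · √(2 + ε 1 · √(2 + ⋯ + ε n · √2)) (defined by backward recurrence with innermost radical √2, all real square roots) converge to x as n → ∞. -/

import Mathlib

open Filter Real

/-- Truncated signed nested radical: `sgnNest ε k n = ε k · √(2 + sgnNest ε (k+1) n)`
for `k ≤ n`, and `0` for `k > n`; so
`sgnNest ε 0 n = ε 0 · √(2 + ε 1 · √(2 + ⋯ + ε n · √2))`. -/
noncomputable def sgnNest (ε : ℕ → ℝ) (k n : ℕ) : ℝ :=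
  if h : k > n then 0 else ε k * Real.sqrt (2 + sgnNest ε (k + 1) n)
termination_by n + 1 - k
decreasing_by omega

/-- Angle sequence: `ψ₀ = arcsin (x/2)`, `ψ_{k+1} = 2|ψ_k| - π/2`. -/
noncomputable def psiSeq (x : ℝ) : ℕ → ℝ
  | 0 => Real.arcsin (x / 2)
  | k + 1 => 2 * |psiSeq x k| - Real.pi / 2

/-- Sign sequence: sign of `ψ_k`. -/
noncomputable def epsSeq (x : ℝ) (k : ℕ) : ℝ := if 0 ≤ psiSeq x k then 1 else -1

lemma epsSeq_pm (x : ℝ) (k : ℕ) : epsSeq x k = -1 ∨ epsSeq x k = 1 := by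
  unfold epsSeq; split <;> simp

lemma epsSeq_mul_abs (x : ℝ) (k : ℕ) : epsSeq x k * |psiSeq x k| = psiSeq x k := by
  unfold epsSeq
  rcases le_or_gt 0 (psiSeq x k) with h | h
  · rw [if_pos h, abs_of_nonneg h, one_mul]
  · rw [if_neg (not_le.mpr h), abs_of_neg h]; ring

lemma psiSeq_mem (x : ℝ) (k : ℕ) :
    -(Real.pi / 2) ≤ psiSeq x k ∧ psiSeq x k ≤ Real.pi / 2 := by
  induction k with
  | zero =>
    exact ⟨Real.neg_pi_div_two_le_arcsin _, Real.arcsin_le_pi_div_two _⟩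
  | succ k ih =>
    have h1 : 0 ≤ |psiSeq x k| := abs_nonneg _
    have h2 : |psiSeq x k| ≤ Real.pi / 2 := abs_le.mpr ih
    constructor
    · show -(Real.pi / 2) ≤ 2 * |psiSeq x k| - Real.pi / 2
      linarith
    · show 2 * |psiSeq x k| - Real.pi / 2 ≤ Real.pi / 2
      linarith

lemma sqrt_two_add_two_sin (θ : ℝ) (h1 : -(Real.pi / 2) ≤ θ) (h2 : θ ≤ Real.pi / 2) :
    Real.sqrt (2 + 2 * Real.sin θ) = 2 * Real.sin (Real.pi / 4 + θ / 2) := by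
  set a := Real.pi / 4 + θ / 2 with ha
  clear_value a
  have hpi := Real.pi_pos
  have ha0 : 0 ≤ a := by rw [ha]; linarith
  have ha1 : a ≤ Real.pi / 2 := by rw [ha]; linarith
  have hsina : 0 ≤ Real.sin a :=
    Real.sin_nonneg_of_nonneg_of_le_pi ha0 (by linarith)
  have hcos2a : Real.cos (2 * a) = -Real.sin θ := by
    have h2a : 2 * a = Real.pi / 2 + θ := by rw [ha]; ring
    rw [h2a, Real.cos_add, Real.cos_pi_div_two, Real.sin_pi_div_two]
    ring
  have hsq : (2 * Real.sin a) ^ 2 = 2 + 2 * Real.sin θ := by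
    have hc := Real.cos_two_mul a
    have hs := Real.sin_sq_add_cos_sq a
    nlinarith [hc, hs, hcos2a]
  rw [← hsq, Real.sqrt_sq (by linarith)]

lemma key (x : ℝ) (n m : ℕ) (hm : m ≤ n + 1) :
    ∃ θ : ℝ, -(Real.pi / 2) ≤ θ ∧ θ ≤ Real.pi / 2 ∧
      sgnNest (epsSeq x) (n + 1 - m) n = 2 * Real.sin θ ∧
      |θ - psiSeq x (n + 1 - m)| ≤ Real.pi / 2 / 2 ^ m := by
  have hpi := Real.pi_pos
  induction m with
  | zero =>
    refine ⟨0, by linarith, by linarith, ?_, ?_⟩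
    · rw [sgnNest, dif_pos (by omega)]
      simp
    · have := psiSeq_mem x (n + 1 - 0)
      rw [pow_zero]
      rw [abs_le]
      constructor <;> [skip; skip] <;> (simp only [zero_sub, div_one]) <;>
        [linarith [this.2]; linarith [this.1]]
  | succ m ih =>
    have hm' : m ≤ n + 1 := by omega
    obtain ⟨θ', hθ1, hθ2, hθ3, hθ4⟩ := ih hm'
    set k := n + 1 - (m + 1) with hkdef
    have hk1 : k + 1 = n + 1 - m := by omega
    have hkn : ¬ k > n := by omega
    have hval : sgnNest (epsSeq x) k n =
        epsSeq x k * (2 * Real.sin (Real.pi / 4 + θ' / 2)) := by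
      rw [sgnNest, dif_neg hkn, hk1, hθ3, ← sqrt_two_add_two_sin θ' hθ1 hθ2]
    set a := Real.pi / 4 + θ' / 2 with ha
    have ha0 : 0 ≤ a := by rw [ha]; linarith
    have ha1 : a ≤ Real.pi / 2 := by rw [ha]; linarith
    have habs : |psiSeq x k| = Real.pi / 4 + psiSeq x (k + 1) / 2 := by
      have : psiSeq x (k + 1) = 2 * |psiSeq x k| - Real.pi / 2 := rfl
      rw [this]; ring
    have hpsik : psiSeq x k = epsSeq x k * (Real.pi / 4 + psiSeq x (k + 1) / 2) := by
      rw [← habs, epsSeq_mul_abs]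
    refine ⟨epsSeq x k * a, ?_, ?_, ?_, ?_⟩
    · rcases epsSeq_pm x k with h | h <;> rw [h] <;> nlinarith
    · rcases epsSeq_pm x k with h | h <;> rw [h] <;> nlinarith
    · rw [hval]
      rcases epsSeq_pm x k with h | h <;> rw [h] <;> simp [Real.sin_neg] <;> ring
    · have heq : epsSeq x k * a - psiSeq x k = epsSeq x k * ((θ' - psiSeq x (k + 1)) / 2) := by
        rw [hpsik, ha]; ring
      rw [heq, abs_mul]
      have hepsabs : |epsSeq x k| = 1 := by
        rcases epsSeq_pm x k with h | h <;> rw [h] <;> simp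
      rw [hepsabs, one_mul, abs_div, abs_of_nonneg (by norm_num : (0:ℝ) ≤ 2)]
      rw [hk1] at *
      have : |θ' - psiSeq x (n + 1 - m)| / 2 ≤ Real.pi / 2 / 2 ^ m / 2 := by
        linarith
      calc |θ' - psiSeq x (n + 1 - m)| / 2 ≤ Real.pi / 2 / 2 ^ m / 2 := this
        _ = Real.pi / 2 / 2 ^ (m + 1) := by rw [pow_succ]; ring

/-- Problem 184 of Pólya and Szegő (1925): every `x ∈ [−2, 2]` is the limit of
nested radicals `ε 0 √(2 + ε 1 √(2 + ⋯ + ε n √2))` with each `ε i = ±1`. -/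
theorem polya_szego_representation (x : ℝ) (hx₁ : -2 ≤ x) (hx₂ : x ≤ 2) :
    ∃ ε : ℕ → ℝ, (∀ n, ε n = -1 ∨ ε n = 1) ∧
      Tendsto (fun n => sgnNest ε 0 n) atTop (nhds x) := by
  have hpi := Real.pi_pos
  refine ⟨epsSeq x, epsSeq_pm x, ?_⟩
  have hx : x = 2 * Real.sin (psiSeq x 0) := by
    show x = 2 * Real.sin (Real.arcsin (x / 2))
    rw [Real.sin_arcsin (by linarith) (by linarith)]
    ring
  have hbound : ∀ n : ℕ, ‖sgnNest (epsSeq x) 0 n - x‖ ≤ Real.pi * (1 / 2) ^ n := by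
    intro n
    obtain ⟨θ, hθ1, hθ2, hθ3, hθ4⟩ := key x n (n + 1) le_rfl
    simp only [Nat.sub_self] at hθ3 hθ4
    rw [hθ3, hx]
    have hlip : |Real.sin θ - Real.sin (psiSeq x 0)| ≤ |θ - psiSeq x 0| := by
      rw [Real.sin_sub_sin, abs_mul, abs_mul, abs_two]
      have hs := Real.abs_sin_le_abs (x := (θ - psiSeq x 0) / 2)
      have hc := abs_cos_le_one ((θ + psiSeq x 0) / 2)
      have hd : |(θ - psiSeq x 0) / 2| = |θ - psiSeq x 0| / 2 := by
        rw [abs_div]; norm_num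
      rw [hd] at hs
      nlinarith [abs_nonneg (Real.sin ((θ - psiSeq x 0) / 2)),
        abs_nonneg (Real.cos ((θ + psiSeq x 0) / 2)), abs_nonneg (θ - psiSeq x 0)]
    have h2 : ‖2 * Real.sin θ - 2 * Real.sin (psiSeq x 0)‖
        = 2 * |Real.sin θ - Real.sin (psiSeq x 0)| := by
      rw [Real.norm_eq_abs, show 2 * Real.sin θ - 2 * Real.sin (psiSeq x 0)
        = 2 * (Real.sin θ - Real.sin (psiSeq x 0)) by ring, abs_mul]
      norm_num
    rw [h2]
    have h3 : Real.pi / 2 / 2 ^ (n + 1) = Real.pi / 2 * (1 / 2) ^ n / 2 := by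
      rw [pow_succ, one_div, inv_pow]
      field_simp
    rw [h3] at hθ4
    have hp : (0:ℝ) < (1 / 2) ^ n := by positivity
    nlinarith [hlip, hθ4]
  have hg : Tendsto (fun n : ℕ => Real.pi * (1 / 2) ^ n) atTop (nhds 0) := by
    have := tendsto_pow_atTop_nhds_zero_of_lt_one
      (by norm_num : (0:ℝ) ≤ 1 / 2) (by norm_num : (1:ℝ) / 2 < 1)
    simpa using this.const_mul Real.pi
  have := squeeze_zero_norm hbound hg
  exact tendsto_sub_nhds_zero_iff.mp this
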